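/- arXiv:2004.11796 — 7 statements merged into one kernel-verified Lean document; each statement's English description precedes it below -/
import Mathlib

section
/- Let Ψ be a Max-2AND instance with m clauses. Then bias(Ψ) ≤ val_Ψ ≤ (m + bias(Ψ))/2. (Lemma 3.3, due to Guruswami–Velingker–Velusamy.) -/
/-- A `Max-2AND` clause: the conjunction of two (not necessarily distinct) literals.
A literal on variable `i` with polarity `b` (`b = true` for `xᵢ`, `b = false` for `¬xᵢ`)
evaluates to `σ i == b`. No clause contains both `xᵢ` and `¬xᵢ`: if the two literals
share a variable they have the same polarity. -/
structure AndClause (n : ℕ) where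
  i : Fin n
  bi : Bool
  j : Fin n
  bj : Bool
  consistent : i = j → bi = bj

/-- Evaluation of an AND clause under an assignment. -/
def AndClause.eval {n : ℕ} (C : AndClause n) (σ : Fin n → Bool) : Bool :=
  (σ C.i == C.bi) && (σ C.j == C.bj)

/-- The number of clauses of `Ψ` satisfied by `σ`, i.e. `val_Ψ(σ)`. -/
def satCount {n : ℕ} (Ψ : List (AndClause n)) (σ : Fin n → Bool) : ℕ :=
  Ψ.countP (fun C => C.eval σ)

/-- `val_Ψ`: the maximum number of simultaneously satisfiable clauses. -/
def maxVal {n : ℕ} (Ψ : List (AndClause n)) : ℕ :=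
  Finset.univ.sup (fun σ : Fin n → Bool => satCount Ψ σ)

/-- `pos_i(Ψ)`: the number of occurrences of the literal `xᵢ` among the `2m`
literal occurrences of `Ψ`. -/
def posCount {n : ℕ} (Ψ : List (AndClause n)) (v : Fin n) : ℕ :=
  (Ψ.map (fun C => (if C.i = v ∧ C.bi = true then 1 else 0)
                 + (if C.j = v ∧ C.bj = true then 1 else 0))).sum

/-- `neg_i(Ψ)`: the number of occurrences of the literal `¬xᵢ`. -/
def negCount {n : ℕ} (Ψ : List (AndClause n)) (v : Fin n) : ℕ :=
  (Ψ.map (fun C => (if C.i = v ∧ C.bi = false then 1 else 0)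
                 + (if C.j = v ∧ C.bj = false then 1 else 0))).sum

/-- `bias(Ψ) = (1/2) Σᵢ |posᵢ(Ψ) − negᵢ(Ψ)|`. -/
noncomputable def bias {n : ℕ} (Ψ : List (AndClause n)) : ℝ :=
  (1/2) * ∑ v : Fin n, |(posCount Ψ v : ℝ) - (negCount Ψ v : ℝ)|

section Aux
variable {n : ℕ}

def pOcc (C : AndClause n) (v : Fin n) : ℕ :=
  (if C.i = v ∧ C.bi = true then 1 else 0) + (if C.j = v ∧ C.bj = true then 1 else 0)

def nOcc (C : AndClause n) (v : Fin n) : ℕ :=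
  (if C.i = v ∧ C.bi = false then 1 else 0) + (if C.j = v ∧ C.bj = false then 1 else 0)

def tOcc (C : AndClause n) (σ : Fin n → Bool) : ℕ :=
  (if σ C.i = C.bi then 1 else 0) + (if σ C.j = C.bj then 1 else 0)

lemma clause_sum (C : AndClause n) (σ : Fin n → Bool) :
    ∑ v, (if σ v then pOcc C v else nOcc C v) = tOcc C σ := by
  have h : ∀ v, (if σ v then pOcc C v else nOcc C v)
      = (if C.i = v then (if σ C.i = C.bi then 1 else 0) else 0)
      + (if C.j = v then (if σ C.j = C.bj then 1 else 0) else 0) := by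
    intro v
    unfold pOcc nOcc
    by_cases h1 : C.i = v <;> by_cases h2 : C.j = v <;>
      cases hσ : σ v <;> cases hb : C.bi <;> cases hc : C.bj <;>
      simp_all
  simp only [h, Finset.sum_add_distrib, Finset.sum_ite_eq, Finset.mem_univ, if_true]
  rfl

lemma clause_tot (C : AndClause n) :
    ∑ v, (pOcc C v + nOcc C v) = 2 := by
  have h : ∀ v, pOcc C v + nOcc C v
      = (if C.i = v then 1 else 0) + (if C.j = v then 1 else 0) := by
    intro v
    unfold pOcc nOcc
    by_cases h1 : C.i = v <;> by_cases h2 : C.j = v <;>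
      cases hb : C.bi <;> cases hc : C.bj <;> simp_all
  simp [h, Finset.sum_add_distrib, Finset.sum_ite_eq]

lemma posCount_cons (C : AndClause n) (Ψ : List (AndClause n)) (v : Fin n) :
    posCount (C :: Ψ) v = pOcc C v + posCount Ψ v := rfl

lemma negCount_cons (C : AndClause n) (Ψ : List (AndClause n)) (v : Fin n) :
    negCount (C :: Ψ) v = nOcc C v + negCount Ψ v := rfl

lemma sum_trueCount (Ψ : List (AndClause n)) (σ : Fin n → Bool) :
    ∑ v, (if σ v then posCount Ψ v else negCount Ψ v) = (Ψ.map (tOcc · σ)).sum := by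
  induction Ψ with
  | nil => simp [posCount, negCount]
  | cons C Ψ ih =>
    have h : ∀ v, (if σ v then posCount (C :: Ψ) v else negCount (C :: Ψ) v)
        = (if σ v then pOcc C v else nOcc C v)
          + (if σ v then posCount Ψ v else negCount Ψ v) := by
      intro v; cases σ v <;> simp [posCount_cons, negCount_cons]
    simp only [h, Finset.sum_add_distrib, clause_sum, ih, List.map_cons, List.sum_cons]

lemma sum_totCount (Ψ : List (AndClause n)) :
    ∑ v, (posCount Ψ v + negCount Ψ v) = 2 * Ψ.length := by
  induction Ψ with
  | nil => simp [posCount, negCount]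
  | cons C Ψ ih =>
    have h : ∀ v, posCount (C :: Ψ) v + negCount (C :: Ψ) v
        = (pOcc C v + nOcc C v) + (posCount Ψ v + negCount Ψ v) := by
      intro v; simp [posCount_cons, negCount_cons]; ring
    simp only [h, Finset.sum_add_distrib, ih, List.length_cons]
    have h2 := clause_tot C
    rw [Finset.sum_add_distrib] at h2
    omega

lemma tOcc_of_eval_true {C : AndClause n} {σ : Fin n → Bool} (h : C.eval σ = true) :
    tOcc C σ = 2 := by
  unfold AndClause.eval at h
  simp only [Bool.and_eq_true, beq_iff_eq] at h
  simp [tOcc, h.1, h.2]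

lemma tOcc_of_eval_false {C : AndClause n} {σ : Fin n → Bool} (h : C.eval σ = false) :
    tOcc C σ ≤ 1 := by
  unfold AndClause.eval at h
  simp only [Bool.and_eq_false_iff, beq_eq_false_iff_ne, ne_eq] at h
  unfold tOcc
  rcases h with h | h <;> simp [h] <;> split_ifs <;> simp

lemma satCount_cons (C : AndClause n) (Ψ : List (AndClause n)) (σ : Fin n → Bool) :
    satCount (C :: Ψ) σ = satCount Ψ σ + (if C.eval σ then 1 else 0) := by
  simp [satCount, List.countP_cons]

lemma two_sat_le_T (Ψ : List (AndClause n)) (σ : Fin n → Bool) :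
    2 * satCount Ψ σ ≤ (Ψ.map (tOcc · σ)).sum := by
  induction Ψ with
  | nil => simp [satCount]
  | cons C Ψ ih =>
    rw [satCount_cons]
    simp only [List.map_cons, List.sum_cons]
    by_cases h : C.eval σ = true
    · rw [if_pos h, tOcc_of_eval_true h]; omega
    · rw [if_neg h]; omega

lemma T_le_len_add_sat (Ψ : List (AndClause n)) (σ : Fin n → Bool) :
    (Ψ.map (tOcc · σ)).sum ≤ Ψ.length + satCount Ψ σ := by
  induction Ψ with
  | nil => simp
  | cons C Ψ ih =>
    rw [satCount_cons]
    simp only [List.map_cons, List.sum_cons, List.length_cons]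
    by_cases h : C.eval σ = true
    · rw [if_pos h, tOcc_of_eval_true h]; omega
    · have hf : C.eval σ = false := by simpa using h
      rw [if_neg h]
      have := tOcc_of_eval_false hf; omega

lemma bias_eq (Ψ : List (AndClause n)) :
    bias Ψ = (∑ v, (max (posCount Ψ v) (negCount Ψ v) : ℝ)) - Ψ.length := by
  have habs : ∀ v : Fin n, |(posCount Ψ v : ℝ) - negCount Ψ v|
      = 2 * max (posCount Ψ v : ℝ) (negCount Ψ v)
        - ((posCount Ψ v : ℝ) + negCount Ψ v) := by
    intro v
    rcases le_total ((posCount Ψ v : ℝ)) (negCount Ψ v) with h | h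
    · rw [max_eq_right h, abs_of_nonpos (by linarith)]; ring
    · rw [max_eq_left h, abs_of_nonneg (by linarith)]; ring
  have htot : (∑ v, ((posCount Ψ v : ℝ) + negCount Ψ v)) = 2 * Ψ.length := by
    have h := congrArg (fun k : ℕ => (k : ℝ)) (sum_totCount Ψ)
    push_cast at h
    exact h
  unfold bias
  rw [Finset.sum_congr rfl (fun v _ => habs v), Finset.sum_sub_distrib, htot,
    ← Finset.mul_sum]
  ring

end Aux

/-- Lemma 3.3 (Guruswami–Velingker–Velusamy): `bias(Ψ) ≤ val_Ψ ≤ (m + bias(Ψ))/2`. -/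
theorem gvv17_bias_bounds {n : ℕ} (Ψ : List (AndClause n)) :
    bias Ψ ≤ (maxVal Ψ : ℝ) ∧ (maxVal Ψ : ℝ) ≤ ((Ψ.length : ℝ) + bias Ψ) / 2 := by
  have hMcast : ((∑ v, max (posCount Ψ v) (negCount Ψ v) : ℕ) : ℝ)
      = ∑ v, (max (posCount Ψ v) (negCount Ψ v) : ℝ) := by
    push_cast [Nat.cast_max]; rfl
  constructor
  · -- lower bound: majority assignment
    set σ : Fin n → Bool := fun v => decide (negCount Ψ v ≤ posCount Ψ v) with hσ
    have hmaj : ∑ v, (if σ v then posCount Ψ v else negCount Ψ v)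
        = ∑ v, max (posCount Ψ v) (negCount Ψ v) := by
      refine Finset.sum_congr rfl fun v _ => ?_
      by_cases h : negCount Ψ v ≤ posCount Ψ v
      · simp [hσ, h, max_eq_left h]
      · simp [hσ, h, max_eq_right (le_of_not_ge h)]
    have hT := T_le_len_add_sat Ψ σ
    rw [← sum_trueCount Ψ σ, hmaj] at hT
    have hsup : satCount Ψ σ ≤ maxVal Ψ :=
      Finset.le_sup (Finset.mem_univ σ)
    rw [bias_eq]
    have : (∑ v, max (posCount Ψ v) (negCount Ψ v) : ℝ)
        ≤ Ψ.length + satCount Ψ σ := by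
      rw [← hMcast]; exact_mod_cast hT
    have : (satCount Ψ σ : ℝ) ≤ maxVal Ψ := by exact_mod_cast hsup
    linarith [show (∑ v, max (posCount Ψ v) (negCount Ψ v) : ℝ)
        ≤ Ψ.length + satCount Ψ σ by rw [← hMcast]; exact_mod_cast hT]
  · -- upper bound
    obtain ⟨σ, -, hσ⟩ := Finset.exists_mem_eq_sup (Finset.univ : Finset (Fin n → Bool))
      Finset.univ_nonempty (fun σ => satCount Ψ σ)
    have h1 := two_sat_le_T Ψ σ
    have h2 : (Ψ.map (tOcc · σ)).sum ≤ ∑ v, max (posCount Ψ v) (negCount Ψ v) := by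
      rw [← sum_trueCount Ψ σ]
      refine Finset.sum_le_sum fun v _ => ?_
      cases σ v <;> simp
    have h3 : (2 * satCount Ψ σ : ℝ) ≤ ∑ v, (max (posCount Ψ v) (negCount Ψ v) : ℝ) := by
      rw [← hMcast]; exact_mod_cast le_trans h1 h2
    rw [maxVal, hσ, bias_eq]
    linarith
end

section
/- Let Ψ be a Max-2AND instance with m > 0 clauses and bias(Ψ) ≤ m/3. Then val_Ψ ≥ m/4 + bias(Ψ)²/(4(m − 2·bias(Ψ))) ≥ 2(m + bias(Ψ))/9. (Lemma 3.4.) -/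
section Helpers

variable {n : ℕ}

private lemma AB_sum_prod_q (q : Fin n → Bool → ℝ) :
    ∑ σ : Fin n → Bool, ∏ v, q v (σ v) = ∏ v, (q v true + q v false) := by
  have hps := Finset.prod_univ_sum (fun _ : Fin n => (Finset.univ : Finset Bool)) q
  rw [Fintype.piFinset_univ] at hps
  rw [← hps]
  exact Finset.prod_congr rfl fun v _ => by rw [Fintype.sum_bool]

private lemma AB_marginal_one (q : Fin n → Bool → ℝ) (hq : ∀ v, q v true + q v false = 1)
    (i : Fin n) (f : Bool → ℝ) :
    ∑ σ : Fin n → Bool, (∏ v, q v (σ v)) * f (σ i)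
      = q i true * f true + q i false * f false := by
  have key : ∀ σ : Fin n → Bool,
      (∏ v, q v (σ v)) * f (σ i)
        = ∏ v, (q v (σ v) * (if v = i then f (σ v) else 1)) := by
    intro σ
    rw [Finset.prod_mul_distrib, Finset.prod_ite_eq' Finset.univ i (fun v => f (σ v))]
    simp
  simp_rw [key]
  have hps := Finset.prod_univ_sum (fun _ : Fin n => (Finset.univ : Finset Bool))
    (fun v b => q v b * (if v = i then f b else 1))
  rw [Fintype.piFinset_univ] at hps
  rw [← hps, Finset.prod_eq_single i]
  · simp
  · intro v _ hv
    rw [Fintype.sum_bool]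
    simp [hv, hq v]
  · simp

private lemma AB_marginal_two (q : Fin n → Bool → ℝ) (hq : ∀ v, q v true + q v false = 1)
    (i j : Fin n) (hij : i ≠ j) (f g : Bool → ℝ) :
    ∑ σ : Fin n → Bool, (∏ v, q v (σ v)) * f (σ i) * g (σ j)
      = (q i true * f true + q i false * f false)
        * (q j true * g true + q j false * g false) := by
  have key : ∀ σ : Fin n → Bool,
      (∏ v, q v (σ v)) * f (σ i) * g (σ j)
        = ∏ v, (q v (σ v) * (if v = i then f (σ v) else 1)
                * (if v = j then g (σ v) else 1)) := by
    intro σ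
    rw [Finset.prod_mul_distrib, Finset.prod_mul_distrib,
      Finset.prod_ite_eq' Finset.univ i (fun v => f (σ v)),
      Finset.prod_ite_eq' Finset.univ j (fun v => g (σ v))]
    simp
  simp_rw [key]
  have hps := Finset.prod_univ_sum (fun _ : Fin n => (Finset.univ : Finset Bool))
    (fun v b => q v b * (if v = i then f b else 1) * (if v = j then g b else 1))
  rw [Fintype.piFinset_univ] at hps
  rw [← hps]
  have hpt : ∀ v : Fin n,
      (∑ b : Bool, q v b * (if v = i then f b else 1) * (if v = j then g b else 1))
      = (if v = i then (q i true * f true + q i false * f false) else 1)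
        * (if v = j then (q j true * g true + q j false * g false) else 1) := by
    intro v
    rw [Fintype.sum_bool]
    by_cases h1 : v = i <;> by_cases h2 : v = j
    · exact absurd (h1.symm.trans h2) hij
    · subst h1; simp [h2]
    · subst h2; simp [h1]
    · simp [h1, h2, hq v]
  simp_rw [hpt]
  rw [Finset.prod_mul_distrib, Finset.prod_ite_eq', Finset.prod_ite_eq']
  simp

private lemma AB_expectation_swap (W : (Fin n → Bool) → ℝ) (l : List (AndClause n)) :
    ∑ σ : Fin n → Bool, W σ * ((satCount l σ : ℕ) : ℝ)
      = (l.map fun C => ∑ σ : Fin n → Bool,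
          W σ * (if C.eval σ then (1:ℝ) else 0)).sum := by
  induction l with
  | nil => simp [satCount]
  | cons C l ih =>
    simp only [satCount] at ih ⊢
    simp only [List.countP_cons, List.map_cons, List.sum_cons]
    have hsplit : ∀ σ : Fin n → Bool,
        W σ * (((l.countP (fun C => C.eval σ) + if C.eval σ then 1 else 0 : ℕ)) : ℝ)
        = W σ * ((l.countP (fun C => C.eval σ) : ℕ) : ℝ)
          + W σ * (if C.eval σ then (1:ℝ) else 0) := by
      intro σ
      by_cases h : C.eval σ <;> push_cast <;> simp [h] <;> ring
    simp_rw [hsplit, Finset.sum_add_distrib, ih]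
    ring

private lemma AB_list_sum_le (l : List (AndClause n)) (f g : AndClause n → ℝ)
    (h : ∀ C ∈ l, f C ≤ g C) : (l.map f).sum ≤ (l.map g).sum := by
  induction l with
  | nil => simp
  | cons C l ih =>
    simp only [List.map_cons, List.sum_cons]
    exact add_le_add (h C (by simp)) (ih fun C hC => h C (by simp [hC]))

private lemma AB_sum_list_swap (l : List (AndClause n)) (g : Fin n → AndClause n → ℝ) :
    ∑ v : Fin n, (l.map (g v)).sum = (l.map fun C => ∑ v, g v C).sum := by
  induction l with
  | nil => simp
  | cons C l ih => simp [Finset.sum_add_distrib, ih]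

private lemma AB_list_mul_sub (l : List (AndClause n)) (c : ℝ) (f g : AndClause n → ℝ) :
    c * ((l.map f).sum - (l.map g).sum) = (l.map fun C => c * (f C - g C)).sum := by
  induction l with
  | nil => simp
  | cons C l ih => simp only [List.map_cons, List.sum_cons] at *; rw [← ih]; ring

private lemma AB_list_cast_sum (l : List (AndClause n)) (f : AndClause n → ℕ) (g : AndClause n → ℝ)
    (h : ∀ C, (f C : ℝ) = g C) : (((l.map f).sum : ℕ) : ℝ) = (l.map g).sum := by
  induction l with
  | nil => simp
  | cons C l ih =>
    rw [List.map_cons, List.map_cons, List.sum_cons, List.sum_cons, Nat.cast_add, ih, h]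

private lemma AB_list_affine (l : List (AndClause n)) (c d : ℝ) (T : AndClause n → ℝ) :
    (l.map fun C => c + d * T C).sum = l.length * c + d * (l.map T).sum := by
  induction l with
  | nil => simp
  | cons C l ih => simp [ih]; push_cast; ring

end Helpers

/-- Lemma 3.4: if `bias(Ψ) ≤ m/3` then
`val_Ψ ≥ m/4 + bias(Ψ)²/(4(m − 2·bias(Ψ))) ≥ 2(m + bias(Ψ))/9`. -/
theorem and_bias_lower_bound {n : ℕ} (Ψ : List (AndClause n))
    (hm : 0 < Ψ.length) (hb : bias Ψ ≤ (Ψ.length : ℝ) / 3) :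
    (Ψ.length : ℝ) / 4 + (bias Ψ) ^ 2 / (4 * ((Ψ.length : ℝ) - 2 * bias Ψ)) ≤ (maxVal Ψ : ℝ) ∧
    2 * ((Ψ.length : ℝ) + bias Ψ) / 9 ≤
      (Ψ.length : ℝ) / 4 + (bias Ψ) ^ 2 / (4 * ((Ψ.length : ℝ) - 2 * bias Ψ)) := by
  set m : ℝ := (Ψ.length : ℝ) with hm'
  set B : ℝ := bias Ψ with hB'
  have hmpos : (0:ℝ) < m := by rw [hm']; exact_mod_cast hm
  have hBnn : 0 ≤ B := by
    rw [hB', bias]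
    positivity
  have hdpos : 0 < m - 2*B := by nlinarith
  set ε : ℝ := B / (2*(m - 2*B)) with hε'
  have hε0 : 0 ≤ ε := by positivity
  have hεhalf : ε ≤ 1/2 := by
    rw [hε', div_le_iff₀ (by linarith)]
    nlinarith
  set s : Fin n → ℝ :=
    fun v => if (negCount Ψ v : ℝ) ≤ (posCount Ψ v : ℝ) then 1 else -1 with hs'
  set t : Fin n → Bool → ℝ := fun v b => if b then s v else -(s v) with ht'
  have hs1 : ∀ v, s v = 1 ∨ s v = -1 := by
    intro v
    simp only [hs']
    split_ifs <;> simp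
  have ht1 : ∀ v b, t v b = 1 ∨ t v b = -1 := by
    intro v b
    rcases hs1 v with h | h <;> cases b <;> simp only [ht'] <;> simp [h]
  set q : Fin n → Bool → ℝ := fun v b => 1/2 + ε * t v b with hq'
  have hqsum : ∀ v, q v true + q v false = 1 := by
    intro v
    rw [hq']
    simp only [ht']
    simp
    ring
  have hq0 : ∀ v b, 0 ≤ q v b := by
    intro v b
    simp only [hq']
    rcases ht1 v b with h | h <;> rw [h] <;> nlinarith
  have hq1 : ∀ v b, q v b ≤ 1 := by
    intro v b
    simp only [hq']
    rcases ht1 v b with h | h <;> rw [h] <;> nlinarith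
  -- the weight of an assignment
  set W : (Fin n → Bool) → ℝ := fun σ => ∏ v, q v (σ v) with hW'
  have hW0 : ∀ σ, 0 ≤ W σ := fun σ => Finset.prod_nonneg fun v _ => hq0 v (σ v)
  have hWsum : ∑ σ : Fin n → Bool, W σ = 1 := by
    rw [hW', AB_sum_prod_q]
    simp [hqsum]
  -- per-clause expectation lower bound
  have hPC : ∀ C ∈ Ψ, q C.i C.bi * q C.j C.bj
      ≤ ∑ σ : Fin n → Bool, W σ * (if C.eval σ then (1:ℝ) else 0) := by
    intro C _
    by_cases hij : C.i = C.j
    · have hbb := C.consistent hij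
      have hind : ∀ σ : Fin n → Bool, (if C.eval σ then (1:ℝ) else 0)
          = (fun b => if b = C.bi then (1:ℝ) else 0) (σ C.i) := by
        intro σ
        by_cases hx : σ C.i = C.bi <;>
          simp [AndClause.eval, ← hij, ← hbb, hx]
      calc q C.i C.bi * q C.j C.bj ≤ q C.i C.bi * 1 := by
            exact mul_le_mul_of_nonneg_left (hq1 _ _) (hq0 _ _)
        _ = q C.i C.bi := mul_one _
        _ = ∑ σ : Fin n → Bool, W σ * (if C.eval σ then (1:ℝ) else 0) := by
            simp_rw [hind, hW']
            rw [AB_marginal_one q hqsum C.i (fun b => if b = C.bi then (1:ℝ) else 0)]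
            cases hc : C.bi <;> simp
    · have hind : ∀ σ : Fin n → Bool, (if C.eval σ then (1:ℝ) else 0)
          = (fun b => if b = C.bi then (1:ℝ) else 0) (σ C.i)
            * (fun b => if b = C.bj then (1:ℝ) else 0) (σ C.j) := by
        intro σ
        by_cases h1 : σ C.i = C.bi <;> by_cases h2 : σ C.j = C.bj <;>
          simp [AndClause.eval, h1, h2]
      have := AB_marginal_two q hqsum C.i C.j hij
        (fun b => if b = C.bi then (1:ℝ) else 0)
        (fun b => if b = C.bj then (1:ℝ) else 0)
      simp_rw [hind, hW', ← mul_assoc]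
      rw [this]
      cases hc1 : C.bi <;> cases hc2 : C.bj <;> simp
  -- expectation ≤ maxVal
  have hsat_le : ∀ σ : Fin n → Bool, (satCount Ψ σ : ℝ) ≤ (maxVal Ψ : ℝ) := by
    intro σ
    have hnat : satCount Ψ σ ≤ maxVal Ψ := Finset.le_sup (Finset.mem_univ σ)
    exact_mod_cast hnat
  have hEmax : ∑ σ : Fin n → Bool, W σ * ((satCount Ψ σ : ℕ) : ℝ) ≤ (maxVal Ψ : ℝ) := by
    calc ∑ σ : Fin n → Bool, W σ * ((satCount Ψ σ : ℕ) : ℝ)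
        ≤ ∑ σ : Fin n → Bool, W σ * (maxVal Ψ : ℝ) :=
          Finset.sum_le_sum fun σ _ => mul_le_mul_of_nonneg_left (hsat_le σ) (hW0 σ)
      _ = (maxVal Ψ : ℝ) := by rw [← Finset.sum_mul, hWsum, one_mul]
  -- the bias identity
  have hocc : ∀ (w : Fin n) (b : Bool),
      (∑ v : Fin n, s v * ((if w = v ∧ b = true then (1:ℝ) else 0)
        - (if w = v ∧ b = false then 1 else 0))) = t w b := by
    intro w b
    have hpt : ∀ v : Fin n, s v * ((if w = v ∧ b = true then (1:ℝ) else 0)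
        - (if w = v ∧ b = false then 1 else 0)) = if w = v then t v b else 0 := by
      intro v
      by_cases h : w = v <;> cases b <;> simp [h, ht']
    simp_rw [hpt, Finset.sum_ite_eq, Finset.mem_univ, if_true]
  have hbias : (Ψ.map fun C => t C.i C.bi + t C.j C.bj).sum = 2 * B := by
    have hsv : ∀ v, s v * ((posCount Ψ v : ℝ) - (negCount Ψ v : ℝ))
        = |(posCount Ψ v : ℝ) - (negCount Ψ v : ℝ)| := by
      intro v
      by_cases hv : (negCount Ψ v : ℝ) ≤ (posCount Ψ v : ℝ)
      · rw [hs']; simp only [hv, if_true, one_mul]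
        rw [abs_of_nonneg (by linarith)]
      · rw [hs']; simp only [hv, if_false, neg_one_mul]
        rw [abs_of_neg (by linarith)]
    have hcastp : ∀ v, (posCount Ψ v : ℝ)
        = (Ψ.map fun C => ((if C.i = v ∧ C.bi = true then (1:ℝ) else 0)
            + (if C.j = v ∧ C.bj = true then 1 else 0))).sum := by
      intro v
      rw [posCount]
      refine AB_list_cast_sum _ _ _ fun C => ?_
      push_cast
      rfl
    have hcastn : ∀ v, (negCount Ψ v : ℝ)
        = (Ψ.map fun C => ((if C.i = v ∧ C.bi = false then (1:ℝ) else 0)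
            + (if C.j = v ∧ C.bj = false then 1 else 0))).sum := by
      intro v
      rw [negCount]
      refine AB_list_cast_sum _ _ _ fun C => ?_
      push_cast
      rfl
    have step1 : ∀ v, s v * ((posCount Ψ v : ℝ) - (negCount Ψ v : ℝ))
        = (Ψ.map fun C => s v * (((if C.i = v ∧ C.bi = true then (1:ℝ) else 0)
            + (if C.j = v ∧ C.bj = true then 1 else 0))
          - ((if C.i = v ∧ C.bi = false then (1:ℝ) else 0)
            + (if C.j = v ∧ C.bj = false then 1 else 0)))).sum := by
      intro v
      rw [hcastp v, hcastn v, AB_list_mul_sub]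
    have step2 : ∑ v : Fin n, |(posCount Ψ v : ℝ) - (negCount Ψ v : ℝ)|
        = (Ψ.map fun C => t C.i C.bi + t C.j C.bj).sum := by
      calc ∑ v : Fin n, |(posCount Ψ v : ℝ) - (negCount Ψ v : ℝ)|
          = ∑ v : Fin n, s v * ((posCount Ψ v : ℝ) - (negCount Ψ v : ℝ)) := by
            exact Finset.sum_congr rfl fun v _ => (hsv v).symm
        _ = ∑ v : Fin n, (Ψ.map fun C => s v * (((if C.i = v ∧ C.bi = true then (1:ℝ) else 0)
              + (if C.j = v ∧ C.bj = true then 1 else 0))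
            - ((if C.i = v ∧ C.bi = false then (1:ℝ) else 0)
              + (if C.j = v ∧ C.bj = false then 1 else 0)))).sum := by
            exact Finset.sum_congr rfl fun v _ => step1 v
        _ = (Ψ.map fun C => ∑ v : Fin n, s v * (((if C.i = v ∧ C.bi = true then (1:ℝ) else 0)
              + (if C.j = v ∧ C.bj = true then 1 else 0))
            - ((if C.i = v ∧ C.bi = false then (1:ℝ) else 0)
              + (if C.j = v ∧ C.bj = false then 1 else 0)))).sum := by
            exact AB_sum_list_swap Ψ _
        _ = (Ψ.map fun C => t C.i C.bi + t C.j C.bj).sum := by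
            refine congrArg List.sum (List.map_congr_left fun C _ => ?_)
            have e1 := hocc C.i C.bi
            have e2 := hocc C.j C.bj
            have hsplit : ∀ v : Fin n, s v * (((if C.i = v ∧ C.bi = true then (1:ℝ) else 0)
                + (if C.j = v ∧ C.bj = true then 1 else 0))
              - ((if C.i = v ∧ C.bi = false then (1:ℝ) else 0)
                + (if C.j = v ∧ C.bj = false then 1 else 0)))
              = s v * ((if C.i = v ∧ C.bi = true then (1:ℝ) else 0)
                  - (if C.i = v ∧ C.bi = false then 1 else 0))
                + s v * ((if C.j = v ∧ C.bj = true then (1:ℝ) else 0)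
                  - (if C.j = v ∧ C.bj = false then 1 else 0)) := by
              intro v; ring
            simp_rw [hsplit]
            rw [Finset.sum_add_distrib, e1, e2]
    rw [hB', bias, step2]
    ring
  -- per-clause product lower bound
  have hr : ∀ C ∈ Ψ, 1/4 - ε^2 + (ε/2 + ε^2) * (t C.i C.bi + t C.j C.bj)
      ≤ q C.i C.bi * q C.j C.bj := by
    intro C _
    have h1 := ht1 C.i C.bi
    have h2 := ht1 C.j C.bj
    have ht1a : t C.i C.bi ≤ 1 := by rcases h1 with h | h <;> rw [h] <;> norm_num
    have ht2a : t C.j C.bj ≤ 1 := by rcases h2 with h | h <;> rw [h] <;> norm_num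
    rw [hq']
    have hkey : 0 ≤ ε^2 * ((1 - t C.i C.bi) * (1 - t C.j C.bj)) :=
      mul_nonneg (sq_nonneg ε) (mul_nonneg (by linarith) (by linarith))
    nlinarith [hkey]
  -- assemble the expectation lower bound
  have hchain : m/4 + ε*B - ε^2*(m - 2*B) ≤ (maxVal Ψ : ℝ) := by
    have e1 : m * (1/4 - ε^2) + (ε/2 + ε^2) * (2*B)
        = (Ψ.map fun C => 1/4 - ε^2 + (ε/2 + ε^2) * (t C.i C.bi + t C.j C.bj)).sum := by
      rw [AB_list_affine, hbias, hm']
    have e2 : (Ψ.map fun C => 1/4 - ε^2 + (ε/2 + ε^2) * (t C.i C.bi + t C.j C.bj)).sum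
        ≤ (Ψ.map fun C => q C.i C.bi * q C.j C.bj).sum := AB_list_sum_le _ _ _ hr
    have e3 : (Ψ.map fun C => q C.i C.bi * q C.j C.bj).sum
        ≤ (Ψ.map fun C => ∑ σ : Fin n → Bool,
            W σ * (if C.eval σ then (1:ℝ) else 0)).sum := AB_list_sum_le _ _ _ hPC
    have e4 := AB_expectation_swap W Ψ
    have : m * (1/4 - ε^2) + (ε/2 + ε^2) * (2*B) ≤ (maxVal Ψ : ℝ) := by
      rw [e1]
      calc _ ≤ (Ψ.map fun C => q C.i C.bi * q C.j C.bj).sum := e2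
        _ ≤ _ := e3
        _ = ∑ σ : Fin n → Bool, W σ * ((satCount Ψ σ : ℕ) : ℝ) := e4.symm
        _ ≤ (maxVal Ψ : ℝ) := hEmax
    nlinarith [this]
  have heq : ε*B - ε^2*(m - 2*B) = B^2 / (4*(m - 2*B)) := by
    rw [hε']
    field_simp
    ring
  constructor
  · calc m/4 + B^2 / (4*(m - 2*B)) = m/4 + (ε*B - ε^2*(m - 2*B)) := by rw [heq]
      _ ≤ (maxVal Ψ : ℝ) := by linarith [hchain]
  · have key : m/4 + B^2/(4*(m-2*B)) - 2*(m+B)/9 = (m-5*B)^2/(36*(m-2*B)) := by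
      rw [div_add_div _ _ (by norm_num) (mul_ne_zero (by norm_num) hdpos.ne'),
        div_sub_div _ _ (mul_ne_zero (by norm_num) (mul_ne_zero (by norm_num) hdpos.ne'))
          (by norm_num),
        div_eq_div_iff (mul_ne_zero (mul_ne_zero (by norm_num)
          (mul_ne_zero (by norm_num) hdpos.ne')) (by norm_num))
          (mul_ne_zero (by norm_num) hdpos.ne')]
      ring
    have hnn : 0 ≤ (m-5*B)^2/(36*(m-2*B)) := by positivity
    linarith [key ▸ hnn]
end

section
/- For all real numbers x ≥ 0 and y > 0, (2x + 3y + x²/y) / (4(x + y)) ≥ √2/2. (Claim 3.7.) -/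
/-- Claim 3.7: for all `x ≥ 0`, `y > 0`, `(2x + 3y + x²/y) / (4(x + y)) ≥ √2/2`. -/
theorem claim_3_7 (x y : ℝ) (hx : 0 ≤ x) (hy : 0 < y) :
    Real.sqrt 2 / 2 ≤ (2 * x + 3 * y + x ^ 2 / y) / (4 * (x + y)) := by
  rw [div_le_div_iff₀ (by norm_num) (by positivity)]
  rw [← sub_nonneg]
  have h2 : Real.sqrt 2 ^ 2 = 2 := Real.sq_sqrt (by norm_num)
  have hx2 : x ^ 2 / y * y = x ^ 2 := div_mul_cancel₀ _ hy.ne'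
  nlinarith [sq_nonneg (x - (Real.sqrt 2 - 1) * y), Real.sqrt_nonneg 2,
    mul_pos hy hy, sq_nonneg x, mul_nonneg hx hy.le,
    sq_nonneg ((x - (Real.sqrt 2 - 1) * y) * y)]
end

section
/- Let ε ∈ (0, 0.01) and δ = ε/2. Let Ψ be a Max-2AND instance with m clauses, and let B be a real number with (1−δ)·bias(Ψ) ≤ B ≤ (1+δ)·bias(Ψ). Define v = 2(m + B)/(9(1+δ)) if B ≤ (m/3)·(1−δ), and v = B/(1+δ) otherwise. Then v ≤ val_Ψ and v ≥ (4/9 − ε)·val_Ψ. (Correctness analysis of Algorithm 2 in Theorem 3.5, the (4/9 − ε)-approximation for Max-2AND.) -/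
namespace Alg2And

variable {n : ℕ}

/-- occurrences of literals agreeing with assignment τ -/
def occA (Ψ : List (AndClause n)) (τ : Fin n → Bool) : ℕ :=
  (Ψ.map (fun C => (if C.bi = τ C.i then 1 else 0) + (if C.bj = τ C.j then 1 else 0))).sum

def maj (Ψ : List (AndClause n)) (v : Fin n) : Bool := negCount Ψ v ≤ posCount Ψ v

lemma clause_sum (C : AndClause n) (τ : Fin n → Bool) :
    (∑ v : Fin n, if τ v then ((if C.i = v ∧ C.bi = true then 1 else 0) + (if C.j = v ∧ C.bj = true then 1 else 0))
          else ((if C.i = v ∧ C.bi = false then 1 else 0) + (if C.j = v ∧ C.bj = false then 1 else 0)))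
    = ((if C.bi = τ C.i then 1 else 0) + (if C.bj = τ C.j then 1 else 0) : ℕ) := by
  have h : ∀ v : Fin n, (if τ v then ((if C.i = v ∧ C.bi = true then 1 else 0) + (if C.j = v ∧ C.bj = true then 1 else 0))
          else ((if C.i = v ∧ C.bi = false then 1 else 0) + (if C.j = v ∧ C.bj = false then 1 else 0)))
      = ((if C.i = v then (if C.bi = τ C.i then 1 else 0) else 0)
        + (if C.j = v then (if C.bj = τ C.j then 1 else 0) else 0) : ℕ) := by
    intro v
    by_cases h1 : C.i = v <;> by_cases h2 : C.j = v <;>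
      cases hv : τ v <;> simp [h1, h2, hv] <;> cases C.bi <;> cases C.bj <;> simp
  rw [Finset.sum_congr rfl (fun v _ => h v), Finset.sum_add_distrib,
    Finset.sum_ite_eq, Finset.sum_ite_eq]
  simp

lemma occ_eq (Ψ : List (AndClause n)) (τ : Fin n → Bool) :
    occA Ψ τ = ∑ v, (if τ v then posCount Ψ v else negCount Ψ v) := by
  induction Ψ with
  | nil => simp [occA, posCount, negCount]
  | cons C l ih =>
    have hsum : (∑ v, (if τ v then posCount (C::l) v else negCount (C::l) v))
        = (∑ v : Fin n, if τ v then ((if C.i = v ∧ C.bi = true then 1 else 0) + (if C.j = v ∧ C.bj = true then 1 else 0))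
            else ((if C.i = v ∧ C.bi = false then 1 else 0) + (if C.j = v ∧ C.bj = false then 1 else 0)))
          + ∑ v, (if τ v then posCount l v else negCount l v) := by
      rw [← Finset.sum_add_distrib]
      refine Finset.sum_congr rfl (fun v _ => ?_)
      cases hv : τ v <;> simp [posCount, negCount, hv]
    rw [hsum, clause_sum]
    simp only [occA, List.map_cons, List.sum_cons] at *
    omega

lemma occ_le_maj (Ψ : List (AndClause n)) (τ : Fin n → Bool) :
    occA Ψ τ ≤ occA Ψ (maj Ψ) := by
  rw [occ_eq, occ_eq]
  refine Finset.sum_le_sum (fun v _ => ?_)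
  simp only [maj]
  by_cases h : negCount Ψ v ≤ posCount Ψ v <;> cases hv : τ v <;> simp [h] <;> omega

lemma occ_maj_real (Ψ : List (AndClause n)) :
    (occA Ψ (maj Ψ) : ℝ) = (Ψ.length : ℝ) + bias Ψ := by
  have h2m : occA Ψ (fun _ => true) + occA Ψ (fun _ => false) = 2 * Ψ.length := by
    induction Ψ with
    | nil => simp [occA]
    | cons C l ih =>
      have hC : ((if C.bi = (fun _ : Fin n => true) C.i then 1 else 0) + (if C.bj = (fun _ : Fin n => true) C.j then 1 else 0))
          + (((if C.bi = (fun _ : Fin n => false) C.i then 1 else 0) + (if C.bj = (fun _ : Fin n => false) C.j then 1 else 0))) = 2 := by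
        cases C.bi <;> cases C.bj <;> simp
      simp only [occA, List.map_cons, List.sum_cons, List.length_cons] at *
      omega
  have hpos : occA Ψ (fun _ => true) = ∑ v, posCount Ψ v := by rw [occ_eq]; simp
  have hneg : occA Ψ (fun _ => false) = ∑ v, negCount Ψ v := by rw [occ_eq]; simp
  have hsum : (∑ v, ((posCount Ψ v : ℝ) + negCount Ψ v)) = 2 * Ψ.length := by
    rw [Finset.sum_add_distrib]
    have := congrArg (Nat.cast (R := ℝ)) h2m
    rw [hpos, hneg] at this
    push_cast at this
    linarith
  have hmaj : (occA Ψ (maj Ψ) : ℝ)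
      = ∑ v, (if negCount Ψ v ≤ posCount Ψ v then (posCount Ψ v : ℝ) else negCount Ψ v) := by
    rw [occ_eq]
    push_cast
    refine Finset.sum_congr rfl (fun v _ => ?_)
    by_cases h : negCount Ψ v ≤ posCount Ψ v <;> simp [maj, h]
  have key : 2 * (occA Ψ (maj Ψ) : ℝ)
      = ∑ v, (((posCount Ψ v : ℝ) + negCount Ψ v) + |(posCount Ψ v : ℝ) - negCount Ψ v|) := by
    rw [hmaj, Finset.mul_sum]
    refine Finset.sum_congr rfl (fun v _ => ?_)
    by_cases h : negCount Ψ v ≤ posCount Ψ v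
    · rw [if_pos h, abs_of_nonneg (sub_nonneg.mpr (Nat.cast_le.mpr h))]; ring
    · have hlt : (posCount Ψ v : ℝ) < negCount Ψ v := Nat.cast_lt.mpr (lt_of_not_ge h)
      rw [if_neg h, abs_of_neg (by linarith)]; ring
  rw [Finset.sum_add_distrib, hsum] at key
  have hb : ∑ v, |(posCount Ψ v : ℝ) - negCount Ψ v| = 2 * bias Ψ := by rw [bias]; ring
  rw [hb] at key
  linarith

lemma two_sat_le_occ (Ψ : List (AndClause n)) (σ : Fin n → Bool) :
    2 * satCount Ψ σ ≤ occA Ψ σ := by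
  induction Ψ with
  | nil => simp [satCount, occA]
  | cons C l ih =>
    simp only [satCount, occA, List.countP_cons, List.map_cons, List.sum_cons] at *
    have hC : (if C.eval σ = true then 1 else 0) * 2
        ≤ (if C.bi = σ C.i then 1 else 0) + (if C.bj = σ C.j then 1 else 0) := by
      by_cases h : C.eval σ = true
      · have h1 : σ C.i = C.bi ∧ σ C.j = C.bj := by
          simpa [AndClause.eval] using h
        simp [h, h1.1, h1.2]
      · simp [h]
    omega

lemma occ_le_sat_add (Ψ : List (AndClause n)) (σ : Fin n → Bool) :
    occA Ψ σ ≤ satCount Ψ σ + Ψ.length := by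
  induction Ψ with
  | nil => simp [satCount, occA]
  | cons C l ih =>
    simp only [satCount, occA, List.countP_cons, List.map_cons, List.sum_cons,
      List.length_cons] at *
    have hC : (if C.bi = σ C.i then 1 else 0) + (if C.bj = σ C.j then 1 else 0)
        ≤ (if C.eval σ = true then 1 else 0) + 1 := by
      by_cases h1 : C.bi = σ C.i <;> by_cases h2 : C.bj = σ C.j
      · have : C.eval σ = true := by simp [AndClause.eval, h1.symm, h2.symm]
        simp [h1, h2, this]
      all_goals simp [h1, h2]
    omega

lemma sat_le_maxVal (Ψ : List (AndClause n)) (σ : Fin n → Bool) :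
    satCount Ψ σ ≤ maxVal Ψ :=
  Finset.le_sup (Finset.mem_univ σ)

lemma exists_max (Ψ : List (AndClause n)) : ∃ σ, satCount Ψ σ = maxVal Ψ := by
  obtain ⟨σ, _, hσ⟩ := Finset.exists_mem_eq_sup (Finset.univ : Finset (Fin n → Bool))
    Finset.univ_nonempty (fun σ => satCount Ψ σ)
  exact ⟨σ, hσ.symm⟩

/-- bias ≤ maxVal -/
lemma bias_le_maxVal (Ψ : List (AndClause n)) : bias Ψ ≤ (maxVal Ψ : ℝ) := by
  have h1 := occ_le_sat_add Ψ (maj Ψ)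
  have h2 := sat_le_maxVal Ψ (maj Ψ)
  have h3 := occ_maj_real Ψ
  have h4 : (occA Ψ (maj Ψ) : ℝ) ≤ (maxVal Ψ : ℝ) + Ψ.length := by
    exact_mod_cast le_trans (Nat.cast_le.mpr h1) (by exact_mod_cast Nat.add_le_add_right h2 _)
  linarith

/-- maxVal ≤ (m + bias)/2 -/
lemma maxVal_le (Ψ : List (AndClause n)) :
    2 * (maxVal Ψ : ℝ) ≤ (Ψ.length : ℝ) + bias Ψ := by
  obtain ⟨σ, hσ⟩ := exists_max Ψ
  have h1 := two_sat_le_occ Ψ σ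
  have h2 := occ_le_maj Ψ σ
  rw [← occ_maj_real Ψ, ← hσ]
  exact_mod_cast le_trans h1 h2

noncomputable def q (Ψ : List (AndClause n)) (v : Fin n) (b : Bool) : ℝ :=
  if b = maj Ψ v then 2/3 else 1/3

lemma q_nonneg (Ψ : List (AndClause n)) (v : Fin n) (b : Bool) : 0 ≤ q Ψ v b := by
  unfold q; split <;> norm_num

lemma q_sum (Ψ : List (AndClause n)) (v : Fin n) : q Ψ v true + q Ψ v false = 1 := by
  unfold q; cases h : maj Ψ v <;> simp [h] <;> norm_num

noncomputable def wt (Ψ : List (AndClause n)) (σ : Fin n → Bool) : ℝ :=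
  ∏ v, q Ψ v (σ v)

lemma wt_nonneg (Ψ : List (AndClause n)) (σ : Fin n → Bool) : 0 ≤ wt Ψ σ :=
  Finset.prod_nonneg (fun v _ => q_nonneg Ψ v (σ v))

lemma sum_prod (h : Fin n → Bool → ℝ) :
    ∑ σ : Fin n → Bool, ∏ v, h v (σ v) = ∏ v, (h v true + h v false) := by
  have h1 : ∀ v : Fin n, h v true + h v false = ∑ b : Bool, h v b := by
    intro v; rw [Fintype.sum_bool]
  rw [Finset.prod_congr rfl (fun v _ => h1 v), Finset.prod_univ_sum]
  rw [Fintype.piFinset_univ]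

lemma wt_total (Ψ : List (AndClause n)) : ∑ σ : Fin n → Bool, wt Ψ σ = 1 := by
  unfold wt
  rw [sum_prod]
  rw [Finset.prod_congr rfl (fun v _ => q_sum Ψ v)]
  simp

lemma marg1 (Ψ : List (AndClause n)) (i : Fin n) (f : Bool → ℝ) :
    ∑ σ : Fin n → Bool, wt Ψ σ * f (σ i)
      = q Ψ i true * f true + q Ψ i false * f false := by
  have key : ∀ σ : Fin n → Bool,
      wt Ψ σ * f (σ i) = ∏ v, (q Ψ v (σ v) * (if v = i then f (σ v) else 1)) := by
    intro σ
    rw [Finset.prod_mul_distrib]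
    unfold wt
    congr 1
    rw [Finset.prod_ite_eq' Finset.univ i (fun v => f (σ v))]
    simp
  rw [Finset.sum_congr rfl (fun σ _ => key σ),
    sum_prod (fun v b => q Ψ v b * (if v = i then f b else 1))]
  rw [Finset.prod_eq_single_of_mem i (Finset.mem_univ i)
    (fun b _ hb => by simp [hb, q_sum Ψ b])]
  simp

lemma marg2 (Ψ : List (AndClause n)) (i j : Fin n) (hij : i ≠ j) (f g : Bool → ℝ) :
    ∑ σ : Fin n → Bool, wt Ψ σ * (f (σ i) * g (σ j))
      = (q Ψ i true * f true + q Ψ i false * f false)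
        * (q Ψ j true * g true + q Ψ j false * g false) := by
  have key : ∀ σ : Fin n → Bool,
      wt Ψ σ * (f (σ i) * g (σ j))
        = ∏ v, (q Ψ v (σ v) * (if v = i then f (σ v) else 1) * (if v = j then g (σ v) else 1)) := by
    intro σ
    rw [Finset.prod_mul_distrib, Finset.prod_mul_distrib]
    unfold wt
    rw [Finset.prod_ite_eq' Finset.univ i (fun v => f (σ v)),
      Finset.prod_ite_eq' Finset.univ j (fun v => g (σ v))]
    simp [mul_assoc]
  rw [Finset.sum_congr rfl (fun σ _ => key σ),
    sum_prod (fun v b => q Ψ v b * (if v = i then f b else 1) * (if v = j then g b else 1))]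
  rw [← Finset.prod_subset (Finset.subset_univ ({i, j} : Finset (Fin n)))
    (fun v _ hv => by
      have h1 : v ≠ i := fun h => hv (by simp [h])
      have h2 : v ≠ j := fun h => hv (by simp [h])
      simp [h1, h2, q_sum Ψ v])]
  rw [Finset.prod_pair hij]
  simp [hij, hij.symm]
  try ring

noncomputable def pr (Ψ : List (AndClause n)) (C : AndClause n) : ℝ :=
  ∑ σ : Fin n → Bool, wt Ψ σ * (if C.eval σ then 1 else 0)

lemma ind_eval (C : AndClause n) (σ : Fin n → Bool) :
    (if C.eval σ = true then (1:ℝ) else 0)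
      = (if σ C.i = C.bi then 1 else 0) * (if σ C.j = C.bj then 1 else 0) := by
  by_cases h1 : σ C.i = C.bi <;> by_cases h2 : σ C.j = C.bj <;>
    simp [AndClause.eval, h1, h2]

lemma pr_ge (Ψ : List (AndClause n)) (C : AndClause n) :
    2/9 * ((if C.bi = maj Ψ C.i then (1:ℝ) else 0) + (if C.bj = maj Ψ C.j then 1 else 0))
      ≤ pr Ψ C := by
  unfold pr
  rw [Finset.sum_congr rfl (fun σ _ => by rw [ind_eval C σ])]
  by_cases hij : C.i = C.j
  · have hb : C.bi = C.bj := C.consistent hij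
    have key : ∀ σ : Fin n → Bool,
        wt Ψ σ * ((if σ C.i = C.bi then (1:ℝ) else 0) * (if σ C.j = C.bj then 1 else 0))
          = wt Ψ σ * (if σ C.i = C.bi then (1:ℝ) else 0) := by
      intro σ
      rw [← hij, ← hb]
      by_cases h : σ C.i = C.bi <;> simp [h]
    rw [Finset.sum_congr rfl (fun σ _ => key σ),
      marg1 Ψ C.i (fun b => if b = C.bi then (1:ℝ) else 0)]
    rw [← hij, ← hb]
    unfold q
    cases hm : maj Ψ C.i <;> cases hbi : C.bi <;> norm_num
  · rw [marg2 Ψ C.i C.j hij (fun b => if b = C.bi then (1:ℝ) else 0)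
      (fun b => if b = C.bj then (1:ℝ) else 0)]
    unfold q
    cases hmi : maj Ψ C.i <;> cases hmj : maj Ψ C.j <;>
      cases hbi : C.bi <;> cases hbj : C.bj <;> norm_num

lemma E_eq (Ψ l : List (AndClause n)) :
    ∑ σ : Fin n → Bool, wt Ψ σ * (satCount l σ : ℝ) = (l.map (pr Ψ)).sum := by
  induction l with
  | nil => simp [satCount]
  | cons C t ih =>
    have hcast : ∀ σ : Fin n → Bool, (satCount (C::t) σ : ℝ)
        = (if C.eval σ then (1:ℝ) else 0) + (satCount t σ : ℝ) := by
      intro σ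
      simp only [satCount, List.countP_cons]
      push_cast
      by_cases h : C.eval σ = true <;> simp [h] <;> ring
    simp only [List.map_cons, List.sum_cons, ← ih, pr]
    rw [Finset.sum_congr rfl (fun σ _ => by rw [hcast σ, mul_add]),
      Finset.sum_add_distrib]

lemma occ_cast (Ψ l : List (AndClause n)) :
    ((l.map (fun C => (if C.bi = maj Ψ C.i then 1 else 0) + (if C.bj = maj Ψ C.j then 1 else 0))).sum : ℕ)
      = ((l.map (fun C => (if C.bi = maj Ψ C.i then (1:ℝ) else 0) + (if C.bj = maj Ψ C.j then 1 else 0))).sum : ℝ) := by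
  induction l with
  | nil => simp
  | cons C t ih =>
    simp only [List.map_cons, List.sum_cons]
    push_cast [← ih]
    by_cases h1 : C.bi = maj Ψ C.i <;> by_cases h2 : C.bj = maj Ψ C.j <;> simp [h1, h2]

/-- the probabilistic lower bound -/
lemma lower_bound (Ψ : List (AndClause n)) :
    2/9 * ((Ψ.length : ℝ) + bias Ψ) ≤ (maxVal Ψ : ℝ) := by
  have hE_le : ∑ σ : Fin n → Bool, wt Ψ σ * (satCount Ψ σ : ℝ) ≤ (maxVal Ψ : ℝ) := by
    calc ∑ σ : Fin n → Bool, wt Ψ σ * (satCount Ψ σ : ℝ)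
        ≤ ∑ σ : Fin n → Bool, wt Ψ σ * (maxVal Ψ : ℝ) := by
          refine Finset.sum_le_sum (fun σ _ => ?_)
          exact mul_le_mul_of_nonneg_left (Nat.cast_le.mpr (sat_le_maxVal Ψ σ)) (wt_nonneg Ψ σ)
      _ = (maxVal Ψ : ℝ) := by rw [← Finset.sum_mul, wt_total, one_mul]
  have hE_ge : 2/9 * (occA Ψ (maj Ψ) : ℝ)
      ≤ ∑ σ : Fin n → Bool, wt Ψ σ * (satCount Ψ σ : ℝ) := by
    rw [E_eq Ψ Ψ]
    have h1 : (occA Ψ (maj Ψ) : ℝ)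
        = (Ψ.map (fun C => (if C.bi = maj Ψ C.i then (1:ℝ) else 0) + (if C.bj = maj Ψ C.j then 1 else 0))).sum := by
      rw [occA, occ_cast Ψ Ψ]
    rw [h1, ← List.sum_map_mul_left]
    refine List.sum_le_sum (fun C _ => ?_)
    exact pr_ge Ψ C
  rw [← occ_maj_real Ψ]
  linarith

lemma bias_nonneg (Ψ : List (AndClause n)) : 0 ≤ bias Ψ := by
  unfold bias
  positivity

end Alg2And

set_option maxHeartbeats 1000000 in
/-- Correctness analysis of Algorithm 2 (Theorem 3.5): the `(4/9 − ε)`-approximation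
for `Max-2AND`. Given `B ∈ (1 ± δ)·bias(Ψ)` with `δ = ε/2`, the output `v` satisfies
`v ≤ val_Ψ` and `v ≥ (4/9 − ε)·val_Ψ`. -/
theorem alg_max2and_correct {n : ℕ} (Ψ : List (AndClause n))
    (ε δ B v : ℝ) (hε : ε ∈ Set.Ioo (0 : ℝ) 0.01) (hδ : δ = ε / 2)
    (hB1 : (1 - δ) * bias Ψ ≤ B) (hB2 : B ≤ (1 + δ) * bias Ψ)
    (hv : v = if B ≤ (Ψ.length : ℝ) / 3 * (1 - δ)
              then 2 * ((Ψ.length : ℝ) + B) / (9 * (1 + δ))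
              else B / (1 + δ)) :
    v ≤ (maxVal Ψ : ℝ) ∧ (4 / 9 - ε) * (maxVal Ψ : ℝ) ≤ v := by
  obtain ⟨hε0, hε1⟩ := hε
  have hε1' : ε < 1/100 := by norm_num at hε1 ⊢; linarith
  set m : ℝ := (Ψ.length : ℝ) with hm
  set b : ℝ := bias Ψ with hbdef
  set M : ℝ := (maxVal Ψ : ℝ) with hMdef
  have hm0 : 0 ≤ m := Nat.cast_nonneg _
  have hM0 : 0 ≤ M := Nat.cast_nonneg _
  have hb0 : 0 ≤ b := Alg2And.bias_nonneg Ψ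
  have hbM : b ≤ M := Alg2And.bias_le_maxVal Ψ
  have h2M : 2 * M ≤ m + b := Alg2And.maxVal_le Ψ
  have hlb : 2/9 * (m + b) ≤ M := Alg2And.lower_bound Ψ
  have hδ0 : 0 < δ := by rw [hδ]; linarith
  have hδ1 : δ < 1/200 := by rw [hδ]; linarith
  have h1δ : (0:ℝ) < 1 + δ := by linarith
  have h1δ' : (0:ℝ) < 1 - δ := by linarith
  have hB0 : 0 ≤ B := le_trans (by nlinarith) hB1
  by_cases hc : B ≤ m / 3 * (1 - δ)
  · rw [hv, if_pos hc]
    constructor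
    · rw [div_le_iff₀ (by linarith : (0:ℝ) < 9 * (1 + δ))]
      nlinarith [mul_nonneg hδ0.le hm0, mul_nonneg hδ0.le hb0]
    · rw [le_div_iff₀ (by linarith : (0:ℝ) < 9 * (1 + δ))]
      have hA : (0:ℝ) ≤ (4 - 9*ε) * (1 + δ) := mul_nonneg (by linarith) h1δ.le
      have hkey := mul_le_mul_of_nonneg_left h2M hA
      nlinarith [hkey, mul_nonneg hε0.le hm0, mul_nonneg hε0.le hb0,
        mul_nonneg hδ0.le hm0, mul_nonneg hδ0.le hb0,
        mul_nonneg (mul_nonneg hε0.le hδ0.le) hm0,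
        mul_nonneg (mul_nonneg hε0.le hδ0.le) hb0]
  · push_neg at hc
    rw [hv, if_neg (not_le.mpr hc)]
    have hmB : (1 - δ) * m < 3 * B := by nlinarith
    have h4 : (1 - δ) * M ≤ 2 * B := by nlinarith
    constructor
    · calc B / (1 + δ) ≤ b := by rw [div_le_iff₀ h1δ]; linarith
        _ ≤ M := hbM
    · rw [le_div_iff₀ h1δ]
      have hco : (0:ℝ) ≤ 4/9 - ε := by linarith
      have hco2 : (0:ℝ) ≤ (4/9 - ε) * (1 + δ) := mul_nonneg hco h1δ.le
      have hstep := mul_le_mul_of_nonneg_left h4 hco2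
      have hkey : 2 * ((4/9 - ε) * (1 + δ)) ≤ 1 - δ := by
        rw [hδ]; nlinarith [mul_nonneg hε0.le hε0.le]
      have hstep2 := mul_le_mul_of_nonneg_right hkey hB0
      have h6 : (1 - δ) * ((4/9 - ε) * M * (1 + δ)) ≤ (1 - δ) * B := by
        calc (1 - δ) * ((4/9 - ε) * M * (1 + δ))
            = (4/9 - ε) * (1 + δ) * ((1 - δ) * M) := by ring
          _ ≤ (4/9 - ε) * (1 + δ) * (2 * B) := hstep
          _ = (2 * ((4/9 - ε) * (1 + δ))) * B := by ring
          _ ≤ (1 - δ) * B := hstep2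
      exact le_of_mul_le_mul_left h6 h1δ'
end

section
/- For all real numbers x ≥ 0, y > 0, and a with 0 ≤ a ≤ y, (2x + 3y + x²/y − 2a) / (4(x + y) − 3a) ≥ √2/2. (Claim 6.5, labelled 'claimnew' in the paper.) -/
/-- Claim 6.5 ("claimnew"): for `x ≥ 0`, `y > 0`, `0 ≤ a ≤ y`,
`(2x + 3y + x²/y − 2a) / (4(x + y) − 3a) ≥ √2/2`. -/
theorem claimnew (x y a : ℝ) (hx : 0 ≤ x) (hy : 0 < y) (ha : 0 ≤ a) (hay : a ≤ y) :
    Real.sqrt 2 / 2 ≤ (2 * x + 3 * y + x ^ 2 / y - 2 * a) / (4 * (x + y) - 3 * a) := by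
  have hD : (0:ℝ) < 4 * (x + y) - 3 * a := by linarith
  rw [div_le_div_iff₀ two_pos hD]
  set s := Real.sqrt 2 with hs
  have hs2 : s ^ 2 = 2 := Real.sq_sqrt (by norm_num)
  have hs1 : (4:ℝ)/3 ≤ s := by
    nlinarith [Real.sqrt_nonneg 2, hs2]
  have hxy : x ^ 2 / y * y = x ^ 2 := div_mul_cancel₀ _ hy.ne'
  have key : 0 ≤ 2 * x ^ 2 - 4 * (s - 1) * x * y + (6 - 4 * s) * y ^ 2 + a * y * (3 * s - 4) := by
    have h1 : 0 ≤ a * y * (3 * s - 4) := by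
      apply mul_nonneg (mul_nonneg ha hy.le); linarith
    nlinarith [sq_nonneg (x - (s - 1) * y), hs2]
  have hmul : s * (4 * (x + y) - 3 * a) * y ≤ (2 * x + 3 * y + x ^ 2 / y - 2 * a) * 2 * y := by
    have expand : (2 * x + 3 * y + x ^ 2 / y - 2 * a) * 2 * y
        = (2 * x + 3 * y - 2 * a) * 2 * y + 2 * x ^ 2 := by field_simp; ring
    rw [expand]
    linarith [key]
  exact le_of_mul_le_mul_right (by linarith [hmul]) hy
end

section
/- Let k ≥ 2, let m_1,…,m_k ≥ 0 be real numbers with D = Σ_{j=2}^k ((2^j − j − 1)/2^{j−2})·m_j > 0, let δ ∈ (0, 0.01), and let B be a real number with Σ_{j=1}^k ((2 − j)/2^{j−1})·m_j ≤ B ≤ (1−δ)·D. Then Σ_{j=1}^k (1 − 2^{−j})·m_j + B²/(4D) ≥ (√2/2)·Σ_{j=1}^k m_j. (Claim 6.3.) -/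
/-- Claim 6.3: for `k ≥ 2`, nonnegative reals `m_1, …, m_k` with
`D = Σ_{j=2}^k ((2^j − j − 1)/2^{j−2})·m_j > 0`, `δ ∈ (0, 0.01)`, and
`Σ_{j=1}^k ((2 − j)/2^{j−1})·m_j ≤ B ≤ (1 − δ)·D`, we have
`Σ_{j=1}^k (1 − 2^{−j})·m_j + B²/(4D) ≥ (√2/2)·Σ_{j=1}^k m_j`. -/
theorem claim_6_3 (k : ℕ) (hk : 2 ≤ k) (m : ℕ → ℝ)
    (hm : ∀ j ∈ Finset.Icc 1 k, 0 ≤ m j) (δ B D : ℝ)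
    (hδ : δ ∈ Set.Ioo (0 : ℝ) 0.01)
    (hD : D = ∑ j ∈ Finset.Icc 2 k, (((2 : ℝ) ^ j - (j : ℝ) - 1) / 2 ^ (j - 2)) * m j)
    (hDpos : 0 < D)
    (hB1 : ∑ j ∈ Finset.Icc 1 k, (((2 : ℝ) - (j : ℝ)) / 2 ^ (j - 1)) * m j ≤ B)
    (hB2 : B ≤ (1 - δ) * D) :
    Real.sqrt 2 / 2 * ∑ j ∈ Finset.Icc 1 k, m j ≤
      ∑ j ∈ Finset.Icc 1 k, (1 - 1 / (2 : ℝ) ^ j) * m j + B ^ 2 / (4 * D) := by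
  set s := Real.sqrt 2 with hs
  have hs2 : s ^ 2 = 2 := Real.sq_sqrt (by norm_num)
  have hs1 : 1 ≤ s := by nlinarith [Real.sqrt_nonneg 2]
  set a : ℝ := (s - 1) / 2 with ha
  have ha0 : 0 ≤ a := by rw [ha]; linarith
  have ha2 : a ^ 2 = (3 - 2 * s) / 4 := by rw [ha]; field_simp; linear_combination 4 * hs2
  have h34 : 4 ≤ 3 * s := by nlinarith [hs2, hs1]
  -- coefficient-wise bound
  have coeff : ∀ j ∈ Finset.Icc 1 k, s / 2 * m j ≤
      ((1 - 1 / (2:ℝ) ^ j) + a * (((2:ℝ) - (j:ℝ)) / 2 ^ (j - 1))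
        - a ^ 2 * (((2:ℝ) ^ j - (j:ℝ) - 1) / 2 ^ (j - 2))) * m j := by
    intro j hj
    have hj1 : 1 ≤ j := (Finset.mem_Icc.mp hj).1
    apply mul_le_mul_of_nonneg_right _ (hm j hj)
    match j, hj1 with
    | 1, _ =>
      norm_num
      rw [ha]; linarith
    | (n+2), _ =>
      have e1 : n + 2 - 1 = n + 1 := rfl
      have e2 : n + 2 - 2 = n := rfl
      rw [e1, e2]
      have hPn : (n : ℕ) + 2 ≤ 2 ^ (n + 1) := Nat.lt_two_pow_self (n := n + 1)
      have hP : ((n:ℝ)) + 2 ≤ 2 * 2 ^ n := by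
        have : (((n+2):ℕ):ℝ) ≤ ((2^(n+1) : ℕ) : ℝ) := by exact_mod_cast hPn
        push_cast at this
        rw [pow_succ] at this
        linarith
      have ht : (0:ℝ) < 2 ^ n := by positivity
      have hcast : ((n+2 : ℕ) : ℝ) = (n:ℝ) + 2 := by push_cast; ring
      rw [hcast, pow_succ, pow_succ]
      set t : ℝ := (2:ℝ) ^ n with htdef
      have hmain : 2 * s * t ≤ 4 * t - 1 - 2 * a * (n:ℝ) - 4 * a ^ 2 * (4 * t - (n:ℝ) - 3) := by
        have hprod : 0 ≤ (3 * s - 4) * (2 * t - ((n:ℝ) + 2)) :=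
          mul_nonneg (by linarith) (by linarith)
        rw [ha2, ha]
        nlinarith [hprod]
      have heq : 1 - 1 / (t * 2 * 2) + a * ((2 - ((n:ℝ) + 2)) / (t * 2))
          - a ^ 2 * ((t * 2 * 2 - ((n:ℝ) + 2) - 1) / t) - s / 2
          = (4 * t - 1 - 2 * a * (n:ℝ) - 4 * a ^ 2 * (4 * t - (n:ℝ) - 3) - 2 * s * t)
            / (4 * t) := by
        field_simp
        ring
      have hnonneg : 0 ≤ (4 * t - 1 - 2 * a * (n:ℝ) - 4 * a ^ 2 * (4 * t - (n:ℝ) - 3)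
          - 2 * s * t) / (4 * t) :=
        div_nonneg (by linarith) (by positivity)
      linarith [heq ▸ hnonneg]
  have hDfull : ∑ j ∈ Finset.Icc 1 k,
      (((2 : ℝ) ^ j - (j : ℝ) - 1) / 2 ^ (j - 2)) * m j = D := by
    rw [hD]
    have hins : Finset.Icc 1 k = insert 1 (Finset.Icc 2 k) := by
      ext x; simp only [Finset.mem_Icc, Finset.mem_insert]; omega
    rw [hins, Finset.sum_insert (by simp)]
    norm_num
  have split : ∑ j ∈ Finset.Icc 1 k,
      ((1 - 1 / (2:ℝ) ^ j) + a * (((2:ℝ) - (j:ℝ)) / 2 ^ (j - 1))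
        - a ^ 2 * (((2:ℝ) ^ j - (j:ℝ) - 1) / 2 ^ (j - 2))) * m j
      = (∑ j ∈ Finset.Icc 1 k, (1 - 1 / (2 : ℝ) ^ j) * m j)
        + a * (∑ j ∈ Finset.Icc 1 k, (((2 : ℝ) - (j : ℝ)) / 2 ^ (j - 1)) * m j)
        - a ^ 2 * (∑ j ∈ Finset.Icc 1 k,
            (((2 : ℝ) ^ j - (j : ℝ) - 1) / 2 ^ (j - 2)) * m j) := by
    rw [Finset.mul_sum, Finset.mul_sum, ← Finset.sum_add_distrib, ← Finset.sum_sub_distrib]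
    exact Finset.sum_congr rfl fun j _ => by ring
  have step1 : s / 2 * ∑ j ∈ Finset.Icc 1 k, m j ≤
      (∑ j ∈ Finset.Icc 1 k, (1 - 1 / (2 : ℝ) ^ j) * m j) + a * B - a ^ 2 * D := by
    rw [Finset.mul_sum]
    calc ∑ j ∈ Finset.Icc 1 k, s / 2 * m j
        ≤ ∑ j ∈ Finset.Icc 1 k,
          ((1 - 1 / (2:ℝ) ^ j) + a * (((2:ℝ) - (j:ℝ)) / 2 ^ (j - 1))
            - a ^ 2 * (((2:ℝ) ^ j - (j:ℝ) - 1) / 2 ^ (j - 2))) * m j :=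
          Finset.sum_le_sum coeff
      _ ≤ _ := by
          rw [split, hDfull]
          have := mul_le_mul_of_nonneg_left hB1 ha0
          linarith
  have step2 : a * B - a ^ 2 * D ≤ B ^ 2 / (4 * D) := by
    rw [le_div_iff₀ (by positivity)]
    nlinarith [sq_nonneg (B - 2 * a * D)]
  linarith
end

section
/- Let k ≥ 2, let m_1,…,m_k ≥ 0 be real numbers with D = Σ_{j=2}^k ((2^j − j − 1)/2^{j−2})·m_j > 0, and let B be a real number with 0 ≤ B ≤ Σ_{j=1}^k ((2 − j)/2^{j−1})·m_j. Then Σ_{j=1}^k (1 − 2^{−j})·m_j + B²/(4D) ≥ (√2/2)·( B/2 + Σ_{j=1}^k ((2^j + j − 2)/2^j)·m_j ). (Claim 6.4.) -/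
lemma aux_coeff (j : ℕ) (hj : 1 ≤ j) :
    0 ≤ (1 - 1/(2:ℝ)^j) + (Real.sqrt 2 - 2)/4 * (((2:ℝ) - (j:ℝ))/2^(j-1))
      - ((Real.sqrt 2 - 1)/2)^2 * (((2:ℝ)^j - (j:ℝ) - 1)/2^(j-2))
      - Real.sqrt 2/2 * (((2:ℝ)^j + (j:ℝ) - 2)/2^j) := by
  set s := Real.sqrt 2 with hs
  have hs2 : s^2 = 2 := Real.sq_sqrt (by norm_num)
  have hs4 : 4 ≤ 3*s := by nlinarith [Real.sqrt_nonneg 2]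
  match j, hj with
  | 1, _ => norm_num; linarith
  | (i+2), _ =>
    have hp : (0:ℝ) < 2^i := by positivity
    have h2p : (i:ℝ) + 2 ≤ 2 * 2^i := by
      have := Nat.lt_two_pow_self (n := i+1)
      have : (i:ℝ) + 2 ≤ 2^(i+1) := by exact_mod_cast this
      calc (i:ℝ) + 2 ≤ 2^(i+1) := this
        _ = 2 * 2^i := by ring
    have e1 : (i+2) - 1 = i + 1 := rfl
    have e2 : (i+2) - 2 = i := rfl
    rw [e1, e2]
    have hEq : (1 - 1/(2:ℝ)^(i+2)) + (s - 2)/4 * (((2:ℝ) - ((i:ℕ)+2:ℕ))/2^(i+1))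
      - ((s - 1)/2)^2 * (((2:ℝ)^(i+2) - ((i:ℕ)+2:ℕ) - 1)/2^i)
      - s/2 * (((2:ℝ)^(i+2) + ((i:ℕ)+2:ℕ) - 2)/2^(i+2))
      = ((3*s - 4) * (2 * 2^i - ((i:ℝ)+2)) - (s^2 - 2) * (4*2^i - (i:ℝ) - 3)) / (4*2^i) := by
      push_cast
      field_simp
      ring
    push_cast at hEq ⊢
    rw [hEq, hs2]
    have h0 : (0:ℝ) ≤ (3*s - 4) * (2 * 2^i - ((i:ℝ)+2)) - ((2:ℝ) - 2) * (4*2^i - (i:ℝ) - 3) := by nlinarith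
    exact div_nonneg h0 (by positivity)



/-- Claim 6.4: for `k ≥ 2`, nonnegative reals `m_1, …, m_k` with
`D = Σ_{j=2}^k ((2^j − j − 1)/2^{j−2})·m_j > 0`, and
`0 ≤ B ≤ Σ_{j=1}^k ((2 − j)/2^{j−1})·m_j`, we have
`Σ_{j=1}^k (1 − 2^{−j})·m_j + B²/(4D) ≥ (√2/2)·(B/2 + Σ_{j=1}^k ((2^j + j − 2)/2^j)·m_j)`. -/
theorem claim_6_4 (k : ℕ) (hk : 2 ≤ k) (m : ℕ → ℝ)
    (hm : ∀ j ∈ Finset.Icc 1 k, 0 ≤ m j) (B D : ℝ)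
    (hD : D = ∑ j ∈ Finset.Icc 2 k, (((2 : ℝ) ^ j - (j : ℝ) - 1) / 2 ^ (j - 2)) * m j)
    (hDpos : 0 < D) (hB0 : 0 ≤ B)
    (hB1 : B ≤ ∑ j ∈ Finset.Icc 1 k, (((2 : ℝ) - (j : ℝ)) / 2 ^ (j - 1)) * m j) :
    Real.sqrt 2 / 2 *
        (B / 2 + ∑ j ∈ Finset.Icc 1 k, (((2 : ℝ) ^ j + (j : ℝ) - 2) / 2 ^ j) * m j) ≤
      ∑ j ∈ Finset.Icc 1 k, (1 - 1 / (2 : ℝ) ^ j) * m j + B ^ 2 / (4 * D) := by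
  set s := Real.sqrt 2 with hs
  have hs2 : s^2 = 2 := Real.sq_sqrt (by norm_num)
  have hsnn : 0 ≤ s := Real.sqrt_nonneg 2
  -- D as a sum over Icc 1 k
  have hicc : Finset.Icc 1 k = insert 1 (Finset.Icc 2 k) := by
    ext x; simp [Finset.mem_Icc, Finset.mem_insert]; omega
  have hDD : (∑ j ∈ Finset.Icc 1 k, (((2 : ℝ) ^ j - (j : ℝ) - 1) / 2 ^ (j - 2)) * m j) = D := by
    rw [hicc, Finset.sum_insert (by simp), hD]
    norm_num
  -- B^2/(4D) lower bound
  have h1 : (s-1)/2 * B - ((s-1)/2)^2 * D ≤ B^2 / (4*D) := by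
    rw [le_div_iff₀ (by positivity)]
    nlinarith [sq_nonneg (B - 2*((s-1)/2)*D), hDpos]
  -- monotonicity in B with negative coefficient
  have h2 : (s - 2)/4 * (∑ j ∈ Finset.Icc 1 k, (((2 : ℝ) - (j : ℝ)) / 2 ^ (j - 1)) * m j)
      ≤ (s - 2)/4 * B := by
    apply mul_le_mul_of_nonpos_left hB1
    nlinarith
  -- key termwise sum
  have key : 0 ≤ (∑ j ∈ Finset.Icc 1 k, (1 - 1 / (2 : ℝ) ^ j) * m j)
      + (s - 2)/4 * (∑ j ∈ Finset.Icc 1 k, (((2 : ℝ) - (j : ℝ)) / 2 ^ (j - 1)) * m j)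
      - ((s-1)/2)^2 * (∑ j ∈ Finset.Icc 1 k, (((2 : ℝ) ^ j - (j : ℝ) - 1) / 2 ^ (j - 2)) * m j)
      - s/2 * (∑ j ∈ Finset.Icc 1 k, (((2 : ℝ) ^ j + (j : ℝ) - 2) / 2 ^ j) * m j) := by
    have hsplit : (∑ j ∈ Finset.Icc 1 k, (1 - 1 / (2 : ℝ) ^ j) * m j)
      + (s - 2)/4 * (∑ j ∈ Finset.Icc 1 k, (((2 : ℝ) - (j : ℝ)) / 2 ^ (j - 1)) * m j)
      - ((s-1)/2)^2 * (∑ j ∈ Finset.Icc 1 k, (((2 : ℝ) ^ j - (j : ℝ) - 1) / 2 ^ (j - 2)) * m j)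
      - s/2 * (∑ j ∈ Finset.Icc 1 k, (((2 : ℝ) ^ j + (j : ℝ) - 2) / 2 ^ j) * m j)
      = ∑ j ∈ Finset.Icc 1 k,
          ((1 - 1/(2:ℝ)^j) + (s - 2)/4 * (((2:ℝ) - (j:ℝ))/2^(j-1))
            - ((s - 1)/2)^2 * (((2:ℝ)^j - (j:ℝ) - 1)/2^(j-2))
            - s/2 * (((2:ℝ)^j + (j:ℝ) - 2)/2^j)) * m j := by
      rw [Finset.mul_sum, Finset.mul_sum, Finset.mul_sum, ← Finset.sum_add_distrib,
        ← Finset.sum_sub_distrib, ← Finset.sum_sub_distrib]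
      exact Finset.sum_congr rfl fun j _ => by ring
    rw [hsplit]
    apply Finset.sum_nonneg
    intro j hj
    have hj1 : 1 ≤ j := (Finset.mem_Icc.mp hj).1
    exact mul_nonneg (aux_coeff j hj1) (hm j hj)
  rw [hDD] at key
  nlinarith [key, h1, h2]
end
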